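/- Fix λ ≥ 0 and define Ψ(y,λ) = H(y) − λ K(y). If y ∈ L²([0,T];ℝ^d) satisfies ‖y‖_T > 0, then for every h ∈ L²([0,T];ℝ^d): Ψ(y+h,λ) − Ψ(y,λ) ≤ ∫₀^T d_y(t,λ)' h_t dt, where d_y(t,λ) = (ω(t)+λ)(θ_t − y_t) − λ|q_α| y_t/‖y‖_T; and if ‖y‖_T = 0, then for every h: Ψ(h,λ) − Ψ(0,λ) ≤ ∫₀^T (ω(t)+λ) θ_t' h_t dt − λ|q_α| ‖h‖_T. In particular Ψ(·,λ) is concave with Fréchet (super)derivative D_y(h,λ) equal to the stated linear functional. -/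

import Mathlib

open MeasureTheory Real Set Filter
open scoped RealInnerProductSpace ENNReal

noncomputable section

abbrev E (d : ℕ) := EuclideanSpace ℝ (Fin d)

/-- ω(t) = T − t + 1 -/
def om (T t : ℝ) : ℝ := T - t + 1

/-- running L²-norm ‖y‖_t = (∫₀^t |y_s|² ds)^{1/2} -/
def nrm {d : ℕ} (y : ℝ → E d) (t : ℝ) : ℝ :=
  Real.sqrt (∫ s in Set.Ioc (0:ℝ) t, ‖y s‖ ^ 2)

/-- running inner product (y,θ)_t = ∫₀^t y_s'θ_s ds -/
def ipr {d : ℕ} (y θ : ℝ → E d) (t : ℝ) : ℝ :=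
  ∫ s in Set.Ioc (0:ℝ) t, ⟪y s, θ s⟫

/-- membership in L²([0,T];ℝ^d) -/
def L2fun {d : ℕ} (T : ℝ) (y : ℝ → E d) : Prop :=
  Measurable y ∧ IntegrableOn (fun t => ‖y t‖ ^ 2) (Set.Ioc 0 T)

def k1 {d : ℕ} (T : ℝ) (θ : ℝ → E d) : ℝ :=
  ∫ t in Set.Ioc (0:ℝ) T, om T t * ‖θ t‖ ^ 2

def k2 {d : ℕ} (T : ℝ) (θ : ℝ → E d) : ℝ :=
  ∫ t in Set.Ioc (0:ℝ) T, om T t ^ 2 * ‖θ t‖ ^ 2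

/-- H(y) = ∫₀^T ω(t)(y_t'θ_t − ½|y_t|²) dt -/
def Hfun {d : ℕ} (T : ℝ) (θ y : ℝ → E d) : ℝ :=
  ∫ t in Set.Ioc (0:ℝ) T, om T t * (⟪y t, θ t⟫ - ‖y t‖ ^ 2 / 2)

/-- K(y) = ½‖y‖_T² + |q_α|‖y‖_T − (y,θ)_T -/
def Kfun {d : ℕ} (T : ℝ) (θ y : ℝ → E d) (qa : ℝ) : ℝ :=
  nrm y T ^ 2 / 2 + |qa| * nrm y T - ipr y θ T

namespace Aux17

variable {d : ℕ} {T : ℝ}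

lemma int_sq_nonneg (y : ℝ → E d) : 0 ≤ ∫ t in Set.Ioc (0:ℝ) T, ‖y t‖ ^ 2 :=
  integral_nonneg fun _ => sq_nonneg _

lemma nrm_sq (y : ℝ → E d) : nrm y T ^ 2 = ∫ t in Set.Ioc (0:ℝ) T, ‖y t‖ ^ 2 :=
  Real.sq_sqrt (int_sq_nonneg y)

lemma nrm_nonneg (y : ℝ → E d) : 0 ≤ nrm y T := Real.sqrt_nonneg _

lemma int_inner {y h : ℝ → E d} (hy : L2fun T y) (hh : L2fun T h) :
    IntegrableOn (fun t => ⟪y t, h t⟫) (Set.Ioc 0 T) := by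
  refine Integrable.mono' ((hy.2.add hh.2).div_const 2)
    (hy.1.inner hh.1).aestronglyMeasurable ?_
  filter_upwards with t
  simp only [Pi.add_apply]
  rw [Real.norm_eq_abs]
  nlinarith [abs_real_inner_le_norm (y t) (h t), sq_nonneg (‖y t‖ - ‖h t‖),
    norm_nonneg (y t), norm_nonneg (h t)]

lemma int_norm_mul {y h : ℝ → E d} (hy : L2fun T y) (hh : L2fun T h) :
    IntegrableOn (fun t => ‖y t‖ * ‖h t‖) (Set.Ioc 0 T) := by
  refine Integrable.mono' ((hy.2.add hh.2).div_const 2)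
    (hy.1.norm.mul hh.1.norm).aestronglyMeasurable ?_
  filter_upwards with t
  simp only [Pi.add_apply]
  rw [Real.norm_eq_abs, abs_of_nonneg (by positivity)]
  nlinarith [sq_nonneg (‖y t‖ - ‖h t‖)]

lemma int_om_mul (hT : 0 < T) {f : ℝ → ℝ} (hf : IntegrableOn f (Set.Ioc 0 T)) :
    IntegrableOn (fun t => om T t * f t) (Set.Ioc 0 T) := by
  refine Integrable.mono' ((hf.abs.const_mul (T + 1))) ?_ ?_
  · exact (((continuous_const.sub continuous_id).add continuous_const).aestronglyMeasurable).mul hf.1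
  · filter_upwards [ae_restrict_mem measurableSet_Ioc] with t ht
    rw [Real.norm_eq_abs, abs_mul]
    have h1 : |om T t| ≤ T + 1 := by
      rw [abs_le]; constructor <;> simp only [om] <;> [linarith [ht.2]; linarith [ht.1]]
    exact mul_le_mul_of_nonneg_right h1 (abs_nonneg _)

lemma om_mem_nonneg {t : ℝ} (ht : t ∈ Set.Ioc (0:ℝ) T) : 0 ≤ om T t := by
  simp only [om]; linarith [ht.2]

lemma l2_add {y h : ℝ → E d} (hy : L2fun T y) (hh : L2fun T h) :
    L2fun T (fun t => y t + h t) := by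
  refine ⟨hy.1.add hh.1, ?_⟩
  refine Integrable.mono' (((hy.2.add hh.2)).const_mul 2)
    ((hy.1.add hh.1).norm.pow_const 2).aestronglyMeasurable ?_
  filter_upwards with t
  simp only [Pi.add_apply]
  rw [Real.norm_eq_abs, abs_of_nonneg (by positivity)]
  nlinarith [norm_add_le (y t) (h t), sq_nonneg (‖y t‖ - ‖h t‖), norm_nonneg (y t),
    norm_nonneg (h t), norm_nonneg (y t + h t)]

lemma l2_smul {y : ℝ → E d} (hy : L2fun T y) (c : ℝ) :
    L2fun T (fun t => c • y t) := by
  refine ⟨hy.1.const_smul c, ?_⟩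
  have e : (fun t => ‖c • y t‖ ^ 2) = fun t => c ^ 2 * ‖y t‖ ^ 2 := by
    funext t; rw [norm_smul]; simp [mul_pow, sq_abs, Real.norm_eq_abs]
  rw [e]; exact hy.2.const_mul _


lemma cauchy_scalar {f g : ℝ → ℝ}
    (hf2 : IntegrableOn (fun t => f t ^ 2) (Set.Ioc 0 T))
    (hg2 : IntegrableOn (fun t => g t ^ 2) (Set.Ioc 0 T))
    (hfg : IntegrableOn (fun t => f t * g t) (Set.Ioc 0 T)) :
    (∫ t in Set.Ioc (0:ℝ) T, f t * g t)
      ≤ Real.sqrt (∫ t in Set.Ioc (0:ℝ) T, f t ^ 2)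
        * Real.sqrt (∫ t in Set.Ioc (0:ℝ) T, g t ^ 2) := by
  set A := ∫ t in Set.Ioc (0:ℝ) T, f t ^ 2 with hA
  set B := ∫ t in Set.Ioc (0:ℝ) T, f t * g t with hB
  set C := ∫ t in Set.Ioc (0:ℝ) T, g t ^ 2 with hC
  have hA0 : 0 ≤ A := integral_nonneg fun _ => sq_nonneg _
  have hC0 : 0 ≤ C := integral_nonneg fun _ => sq_nonneg _
  have key : ∀ c : ℝ, 0 ≤ A - 2 * c * B + c ^ 2 * C := by
    intro c
    have e : (fun t => (f t - c * g t) ^ 2)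
        = fun t => (f t ^ 2 - 2 * c * (f t * g t)) + c ^ 2 * g t ^ 2 := by
      funext t; ring
    have h2 : 0 ≤ ∫ t in Set.Ioc (0:ℝ) T, (f t - c * g t) ^ 2 :=
      integral_nonneg fun t => sq_nonneg _
    have i0 : IntegrableOn (fun t => 2 * c * (f t * g t)) (Set.Ioc 0 T) :=
      hfg.const_mul (2 * c)
    have i1 : IntegrableOn (fun t => f t ^ 2 - 2 * c * (f t * g t)) (Set.Ioc 0 T) :=
      hf2.sub i0
    have i2 : IntegrableOn (fun t => c ^ 2 * g t ^ 2) (Set.Ioc 0 T) :=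
      hg2.const_mul _
    rw [e, integral_add i1 i2, integral_sub hf2 i0, integral_const_mul, integral_const_mul] at h2
    linarith
  rcases eq_or_lt_of_le hC0 with hCz | hCpos
  · by_contra hlt
    push_neg at hlt
    rw [← hCz, Real.sqrt_zero, mul_zero] at hlt
    have hk := key ((A + 1) / (2 * B))
    rw [← hCz, mul_zero] at hk
    have hB0 : (0:ℝ) < B := hlt
    have : 2 * ((A + 1) / (2 * B)) * B = A + 1 := by field_simp
    linarith
  · have hk := key (B / C)
    have hB2 : B ^ 2 ≤ A * C := by
      have e : A - 2 * (B / C) * B + (B / C) ^ 2 * C = A - B ^ 2 / C := by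
        field_simp; ring
      rw [e] at hk
      have h3 : B ^ 2 / C ≤ A := by linarith
      exact (div_le_iff₀ hCpos).mp h3
    calc B ≤ |B| := le_abs_self B
      _ = Real.sqrt (B ^ 2) := (Real.sqrt_sq_eq_abs B).symm
      _ ≤ Real.sqrt (A * C) := Real.sqrt_le_sqrt hB2
      _ = Real.sqrt A * Real.sqrt C := Real.sqrt_mul hA0 C

lemma cs_inner {y h : ℝ → E d} (hy : L2fun T y) (hh : L2fun T h) :
    (∫ t in Set.Ioc (0:ℝ) T, ⟪y t, h t⟫) ≤ nrm y T * nrm h T := by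
  have h1 : (∫ t in Set.Ioc (0:ℝ) T, ⟪y t, h t⟫)
      ≤ ∫ t in Set.Ioc (0:ℝ) T, ‖y t‖ * ‖h t‖ :=
    integral_mono (int_inner hy hh) (int_norm_mul hy hh)
      fun t => real_inner_le_norm (y t) (h t)
  have h2 := cauchy_scalar (T := T) (f := fun t => ‖y t‖) (g := fun t => ‖h t‖)
    hy.2 hh.2 (int_norm_mul hy hh)
  calc _ ≤ _ := h1
    _ ≤ _ := h2
    _ = nrm y T * nrm h T := rfl

lemma int_sq_add {y h : ℝ → E d} (hy : L2fun T y) (hh : L2fun T h) :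
    (∫ t in Set.Ioc (0:ℝ) T, ‖y t + h t‖ ^ 2)
      = (∫ t in Set.Ioc (0:ℝ) T, ‖y t‖ ^ 2)
        + 2 * (∫ t in Set.Ioc (0:ℝ) T, ⟪y t, h t⟫)
        + ∫ t in Set.Ioc (0:ℝ) T, ‖h t‖ ^ 2 := by
  have e : (fun t => ‖y t + h t‖ ^ 2)
      = fun t => (‖y t‖ ^ 2 + 2 * ⟪y t, h t⟫) + ‖h t‖ ^ 2 := by
    funext t; rw [norm_add_sq_real]
  have i0 : IntegrableOn (fun t => 2 * ⟪y t, h t⟫) (Set.Ioc 0 T) :=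
    (int_inner hy hh).const_mul 2
  have i1 : IntegrableOn (fun t => ‖y t‖ ^ 2 + 2 * ⟪y t, h t⟫) (Set.Ioc 0 T) :=
    hy.2.add i0
  rw [e, integral_add i1 hh.2, integral_add hy.2 i0, integral_const_mul]

lemma nrm_add_sq {y h : ℝ → E d} (hy : L2fun T y) (hh : L2fun T h) :
    nrm (fun t => y t + h t) T ^ 2
      = nrm y T ^ 2 + 2 * (∫ t in Set.Ioc (0:ℝ) T, ⟪y t, h t⟫) + nrm h T ^ 2 := by
  rw [nrm_sq, nrm_sq, nrm_sq]; exact int_sq_add hy hh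

lemma nrm_add_le {y h : ℝ → E d} (hy : L2fun T y) (hh : L2fun T h) :
    nrm (fun t => y t + h t) T ≤ nrm y T + nrm h T := by
  have h1 : nrm (fun t => y t + h t) T ^ 2 ≤ (nrm y T + nrm h T) ^ 2 := by
    rw [nrm_add_sq hy hh]
    nlinarith [cs_inner hy hh]
  have h2 : 0 ≤ nrm y T + nrm h T := add_nonneg (nrm_nonneg y) (nrm_nonneg h)
  nlinarith [nrm_nonneg (T := T) (fun t => y t + h t), h1]

lemma nrm_smul (y : ℝ → E d) (c : ℝ) :
    nrm (fun t => c • y t) T = |c| * nrm y T := by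
  unfold nrm
  have e : (fun t => ‖c • y t‖ ^ 2) = fun t => c ^ 2 * ‖y t‖ ^ 2 := by
    funext t; rw [norm_smul]; simp [mul_pow, sq_abs, Real.norm_eq_abs]
  rw [show (∫ s in Set.Ioc (0:ℝ) T, ‖c • y s‖ ^ 2) = ∫ s in Set.Ioc (0:ℝ) T, c ^ 2 * ‖y s‖ ^ 2
      from by rw [show (fun s => ‖c • y s‖ ^ 2) = fun s => c ^ 2 * ‖y s‖ ^ 2 from e],
    integral_const_mul, Real.sqrt_mul (sq_nonneg c), Real.sqrt_sq_eq_abs]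


lemma int_Hint (hT : 0 < T) {θ y : ℝ → E d} (hθ : L2fun T θ) (hy : L2fun T y) :
    IntegrableOn (fun t => om T t * (⟪y t, θ t⟫ - ‖y t‖ ^ 2 / 2)) (Set.Ioc 0 T) := by
  have i : IntegrableOn (fun t => ⟪y t, θ t⟫ - ‖y t‖ ^ 2 / 2) (Set.Ioc 0 T) :=
    (int_inner hy hθ).sub (hy.2.div_const 2)
  exact int_om_mul hT i

lemma ipr_add {θ y h : ℝ → E d} (hy : L2fun T y) (hh : L2fun T h) (hθ : L2fun T θ) :
    ipr (fun t => y t + h t) θ T = ipr y θ T + ipr h θ T := by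
  simp only [ipr]
  have e : (fun s => ⟪y s + h s, θ s⟫) = fun s => ⟪y s, θ s⟫ + ⟪h s, θ s⟫ := by
    funext s; rw [inner_add_left]
  rw [e, integral_add (int_inner hy hθ) (int_inner hh hθ)]

lemma H_add (hT : 0 < T) {θ y h : ℝ → E d} (hθ : L2fun T θ) (hy : L2fun T y)
    (hh : L2fun T h) :
    Hfun T θ (fun t => y t + h t)
      = Hfun T θ y + (∫ t in Set.Ioc (0:ℝ) T, om T t * ⟪h t, θ t⟫)
        - (∫ t in Set.Ioc (0:ℝ) T, om T t * ⟪y t, h t⟫)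
        - (∫ t in Set.Ioc (0:ℝ) T, om T t * ‖h t‖ ^ 2) / 2 := by
  simp only [Hfun]
  have e : (fun t => om T t * (⟪y t + h t, θ t⟫ - ‖y t + h t‖ ^ 2 / 2))
      = fun t => (om T t * (⟪y t, θ t⟫ - ‖y t‖ ^ 2 / 2) + om T t * ⟪h t, θ t⟫)
          - (om T t * ⟪y t, h t⟫ + om T t * ‖h t‖ ^ 2 / 2) := by
    funext t
    rw [norm_add_sq_real, inner_add_left]
    ring
  have iH := int_Hint hT hθ hy
  have i2 : IntegrableOn (fun t => om T t * ⟪h t, θ t⟫) (Set.Ioc 0 T) :=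
    int_om_mul hT (int_inner hh hθ)
  have i3 : IntegrableOn (fun t => om T t * ⟪y t, h t⟫) (Set.Ioc 0 T) :=
    int_om_mul hT (int_inner hy hh)
  have i4 : IntegrableOn (fun t => om T t * ‖h t‖ ^ 2 / 2) (Set.Ioc 0 T) :=
    (int_om_mul hT hh.2).div_const 2
  have iL : IntegrableOn
      (fun t => om T t * (⟪y t, θ t⟫ - ‖y t‖ ^ 2 / 2) + om T t * ⟪h t, θ t⟫)
      (Set.Ioc 0 T) := iH.add i2
  have iR : IntegrableOn (fun t => om T t * ⟪y t, h t⟫ + om T t * ‖h t‖ ^ 2 / 2)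
      (Set.Ioc 0 T) := i3.add i4
  rw [e, integral_sub iL iR, integral_add iH i2, integral_add i3 i4, integral_div]
  ring

lemma H_split (hT : 0 < T) {θ h : ℝ → E d} (hθ : L2fun T θ) (hh : L2fun T h) :
    Hfun T θ h = (∫ t in Set.Ioc (0:ℝ) T, om T t * ⟪h t, θ t⟫)
      - (∫ t in Set.Ioc (0:ℝ) T, om T t * ‖h t‖ ^ 2) / 2 := by
  simp only [Hfun]
  have e : (fun t => om T t * (⟪h t, θ t⟫ - ‖h t‖ ^ 2 / 2))
      = fun t => om T t * ⟪h t, θ t⟫ - om T t * ‖h t‖ ^ 2 / 2 := by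
    funext t; ring
  have i2 : IntegrableOn (fun t => om T t * ⟪h t, θ t⟫) (Set.Ioc 0 T) :=
    int_om_mul hT (int_inner hh hθ)
  have i4 : IntegrableOn (fun t => om T t * ‖h t‖ ^ 2 / 2) (Set.Ioc 0 T) :=
    (int_om_mul hT hh.2).div_const 2
  rw [e, integral_sub i2 i4, integral_div]

lemma H_zero (θ : ℝ → E d) : Hfun T θ (fun _ => (0 : E d)) = 0 := by
  simp [Hfun]

lemma K_zero (θ : ℝ → E d) (qa : ℝ) : Kfun T θ (fun _ => (0 : E d)) qa = 0 := by
  simp [Kfun, nrm, ipr]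

lemma int_om_sq_nonneg (y : ℝ → E d) :
    0 ≤ ∫ t in Set.Ioc (0:ℝ) T, om T t * ‖y t‖ ^ 2 :=
  setIntegral_nonneg measurableSet_Ioc fun t ht =>
    mul_nonneg (om_mem_nonneg ht) (sq_nonneg _)

end Aux17

open Aux17

/-- concavity and supergradient of Ψ(·,λ) = H − λK. -/
theorem stmt17 {d : ℕ} (hd : 1 ≤ d) {T : ℝ} (hT : 0 < T)
    (θ : ℝ → E d) (hθm : Measurable θ)
    (hθ2 : IntegrableOn (fun t => ‖θ t‖ ^ 2) (Set.Ioc 0 T))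
    {a qa : ℝ} (ha0 : 0 < a) (ha2 : a < 1 / 2) (hqneg : qa < 0)
    (hquant : (∫ s in Set.Iic qa, Real.exp (-s ^ 2 / 2)) = a * Real.sqrt (2 * π))
    {lam : ℝ} (hlam : 0 ≤ lam) :
    (∀ y : ℝ → E d, L2fun T y → 0 < nrm y T →
      ∀ h : ℝ → E d, L2fun T h →
        (Hfun T θ (fun t => y t + h t) - lam * Kfun T θ (fun t => y t + h t) qa)
            - (Hfun T θ y - lam * Kfun T θ y qa)
          ≤ ∫ t in Set.Ioc (0:ℝ) T,
              ⟪(om T t + lam) • (θ t - y t) - (lam * |qa| / nrm y T) • y t, h t⟫) ∧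
    (∀ h : ℝ → E d, L2fun T h →
        (Hfun T θ h - lam * Kfun T θ h qa)
            - (Hfun T θ (fun _ => (0 : E d)) - lam * Kfun T θ (fun _ => (0 : E d)) qa)
          ≤ (∫ t in Set.Ioc (0:ℝ) T, (om T t + lam) * ⟪θ t, h t⟫)
              - lam * |qa| * nrm h T) ∧
    (∀ y1 y2 : ℝ → E d, L2fun T y1 → L2fun T y2 →
      ∀ c1 c2 : ℝ, 0 ≤ c1 → 0 ≤ c2 → c1 + c2 = 1 →
        c1 * (Hfun T θ y1 - lam * Kfun T θ y1 qa)
            + c2 * (Hfun T θ y2 - lam * Kfun T θ y2 qa)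
          ≤ Hfun T θ (fun t => c1 • y1 t + c2 • y2 t)
              - lam * Kfun T θ (fun t => c1 • y1 t + c2 • y2 t) qa) := by
  have hθL : L2fun T θ := ⟨hθm, hθ2⟩
  refine ⟨?_, ?_, ?_⟩
  · -- Part 1
    intro y hy hN h hh
    have hz : L2fun T (fun t => y t + h t) := l2_add hy hh
    have eK : Kfun T θ (fun t => y t + h t) qa
        = Kfun T θ y qa + (∫ t in Set.Ioc (0:ℝ) T, ⟪y t, h t⟫) + nrm h T ^ 2 / 2
          + |qa| * (nrm (fun t => y t + h t) T - nrm y T) - ipr h θ T := by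
      simp only [Kfun]
      rw [nrm_add_sq hy hh, ipr_add hy hh hθL]
      ring
    have i2 : IntegrableOn (fun t => om T t * ⟪h t, θ t⟫) (Set.Ioc 0 T) :=
      int_om_mul hT (int_inner hh hθL)
    have i3 : IntegrableOn (fun t => om T t * ⟪y t, h t⟫) (Set.Ioc 0 T) :=
      int_om_mul hT (int_inner hy hh)
    have il1 : IntegrableOn (fun t => lam * ⟪h t, θ t⟫) (Set.Ioc 0 T) :=
      (int_inner hh hθL).const_mul lam
    have il2 : IntegrableOn
        (fun t => (lam + lam * |qa| / nrm y T) * ⟪y t, h t⟫) (Set.Ioc 0 T) :=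
      (int_inner hy hh).const_mul _
    have eR : (∫ t in Set.Ioc (0:ℝ) T,
          ⟪(om T t + lam) • (θ t - y t) - (lam * |qa| / nrm y T) • y t, h t⟫)
        = ((∫ t in Set.Ioc (0:ℝ) T, om T t * ⟪h t, θ t⟫) + lam * ipr h θ T)
          - ((∫ t in Set.Ioc (0:ℝ) T, om T t * ⟪y t, h t⟫)
            + (lam + lam * |qa| / nrm y T) * (∫ t in Set.Ioc (0:ℝ) T, ⟪y t, h t⟫)) := by
      have e : (fun t => ⟪(om T t + lam) • (θ t - y t) - (lam * |qa| / nrm y T) • y t, h t⟫)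
          = fun t => (om T t * ⟪h t, θ t⟫ + lam * ⟪h t, θ t⟫)
              - (om T t * ⟪y t, h t⟫ + (lam + lam * |qa| / nrm y T) * ⟪y t, h t⟫) := by
        funext t
        rw [inner_sub_left, real_inner_smul_left, real_inner_smul_left, inner_sub_left,
          real_inner_comm (h t) (θ t)]
        ring
      have iA : IntegrableOn (fun t => om T t * ⟪h t, θ t⟫ + lam * ⟪h t, θ t⟫)
          (Set.Ioc 0 T) := i2.add il1
      have iB : IntegrableOn
          (fun t => om T t * ⟪y t, h t⟫ + (lam + lam * |qa| / nrm y T) * ⟪y t, h t⟫)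
          (Set.Ioc 0 T) := i3.add il2
      rw [e, integral_sub iA iB, integral_add i2 il1, integral_add i3 il2,
        integral_const_mul, integral_const_mul]
      rfl
    have hMN : nrm y T ^ 2 + (∫ t in Set.Ioc (0:ℝ) T, ⟪y t, h t⟫)
        ≤ nrm y T * nrm (fun t => y t + h t) T := by
      have hcs := cs_inner hy hz
      have e : (fun t => ⟪y t, y t + h t⟫) = fun t => ‖y t‖ ^ 2 + ⟪y t, h t⟫ := by
        funext t; rw [inner_add_right, real_inner_self_eq_norm_sq]
      rw [e, integral_add hy.2 (int_inner hy hh), ← nrm_sq y] at hcs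
      exact hcs
    have hdiv : lam * |qa| / nrm y T * (∫ t in Set.Ioc (0:ℝ) T, ⟪y t, h t⟫)
        ≤ lam * |qa| * (nrm (fun t => y t + h t) T - nrm y T) := by
      have h4 : (∫ t in Set.Ioc (0:ℝ) T, ⟪y t, h t⟫) / nrm y T
          ≤ nrm (fun t => y t + h t) T - nrm y T := by
        rw [div_le_iff₀ hN]
        nlinarith [hMN]
      calc lam * |qa| / nrm y T * (∫ t in Set.Ioc (0:ℝ) T, ⟪y t, h t⟫)
          = lam * |qa| * ((∫ t in Set.Ioc (0:ℝ) T, ⟪y t, h t⟫) / nrm y T) := by ring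
        _ ≤ lam * |qa| * (nrm (fun t => y t + h t) T - nrm y T) :=
            mul_le_mul_of_nonneg_left h4 (mul_nonneg hlam (abs_nonneg qa))
    rw [H_add hT hθL hy hh, eK, eR]
    linarith [int_om_sq_nonneg (T := T) h, hdiv, mul_nonneg hlam (sq_nonneg (nrm h T))]
  · -- Part 2
    intro h hh
    have i2 : IntegrableOn (fun t => om T t * ⟪h t, θ t⟫) (Set.Ioc 0 T) :=
      int_om_mul hT (int_inner hh hθL)
    have il1 : IntegrableOn (fun t => lam * ⟪h t, θ t⟫) (Set.Ioc 0 T) :=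
      (int_inner hh hθL).const_mul lam
    have eR : (∫ t in Set.Ioc (0:ℝ) T, (om T t + lam) * ⟪θ t, h t⟫)
        = (∫ t in Set.Ioc (0:ℝ) T, om T t * ⟪h t, θ t⟫) + lam * ipr h θ T := by
      have e : (fun t => (om T t + lam) * ⟪θ t, h t⟫)
          = fun t => om T t * ⟪h t, θ t⟫ + lam * ⟪h t, θ t⟫ := by
        funext t
        rw [real_inner_comm (h t) (θ t)]
        ring
      rw [e, integral_add i2 il1, integral_const_mul]
      rfl
    have eKh : Kfun T θ h qa = nrm h T ^ 2 / 2 + |qa| * nrm h T - ipr h θ T := rfl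
    rw [H_split hT hθL hh, H_zero, K_zero, eR, eKh]
    linarith [int_om_sq_nonneg (T := T) h, mul_nonneg hlam (sq_nonneg (nrm h T))]
  · -- Part 3
    intro y1 y2 hy1 hy2 c1 c2 hc1 hc2 hsum
    have hz : L2fun T (fun t => c1 • y1 t + c2 • y2 t) :=
      l2_add (l2_smul hy1 c1) (l2_smul hy2 c2)
    have iH1 := int_Hint hT hθL hy1
    have iH2 := int_Hint hT hθL hy2
    have iHz := int_Hint hT hθL hz
    have i1 : IntegrableOn (fun t => c1 * (om T t * (⟪y1 t, θ t⟫ - ‖y1 t‖ ^ 2 / 2)))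
        (Set.Ioc 0 T) := iH1.const_mul c1
    have i2 : IntegrableOn (fun t => c2 * (om T t * (⟪y2 t, θ t⟫ - ‖y2 t‖ ^ 2 / 2)))
        (Set.Ioc 0 T) := iH2.const_mul c2
    have i12 : IntegrableOn (fun t => c1 * (om T t * (⟪y1 t, θ t⟫ - ‖y1 t‖ ^ 2 / 2))
        + c2 * (om T t * (⟪y2 t, θ t⟫ - ‖y2 t‖ ^ 2 / 2))) (Set.Ioc 0 T) := i1.add i2
    have eHz : c1 * Hfun T θ y1 + c2 * Hfun T θ y2
        ≤ Hfun T θ (fun t => c1 • y1 t + c2 • y2 t) := by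
      simp only [Hfun]
      rw [← integral_const_mul, ← integral_const_mul, ← integral_add i1 i2]
      refine setIntegral_mono_on i12 iHz measurableSet_Ioc ?_
      intro t ht
      have hom := om_mem_nonneg (T := T) ht
      have hip : ⟪c1 • y1 t + c2 • y2 t, θ t⟫ = c1 * ⟪y1 t, θ t⟫ + c2 * ⟪y2 t, θ t⟫ := by
        rw [inner_add_left, real_inner_smul_left, real_inner_smul_left]
      have hz2 : ‖c1 • y1 t + c2 • y2 t‖ ^ 2 ≤ c1 * ‖y1 t‖ ^ 2 + c2 * ‖y2 t‖ ^ 2 := by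
        have h1 := norm_add_sq_real (c1 • y1 t) (c2 • y2 t)
        have h2 : ⟪c1 • y1 t, c2 • y2 t⟫ = c1 * c2 * ⟪y1 t, y2 t⟫ := by
          rw [real_inner_smul_left, real_inner_smul_right]; ring
        have h3 : ‖c1 • y1 t‖ = c1 * ‖y1 t‖ := by
          rw [norm_smul, Real.norm_eq_abs, abs_of_nonneg hc1]
        have h4 : ‖c2 • y2 t‖ = c2 * ‖y2 t‖ := by
          rw [norm_smul, Real.norm_eq_abs, abs_of_nonneg hc2]
        rw [h2, h3, h4] at h1
        nlinarith [real_inner_le_norm (y1 t) (y2 t), mul_nonneg hc1 hc2,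
          sq_nonneg (‖y1 t‖ - ‖y2 t‖), norm_nonneg (y1 t), norm_nonneg (y2 t)]
      rw [hip]
      nlinarith [mul_le_mul_of_nonneg_left hz2 hom]
    have hnz : nrm (fun t => c1 • y1 t + c2 • y2 t) T ≤ c1 * nrm y1 T + c2 * nrm y2 T := by
      have h1 := nrm_add_le (l2_smul hy1 c1) (l2_smul hy2 c2)
      rw [nrm_smul, nrm_smul, abs_of_nonneg hc1, abs_of_nonneg hc2] at h1
      exact h1
    have hsq : nrm (fun t => c1 • y1 t + c2 • y2 t) T ^ 2
        ≤ c1 * nrm y1 T ^ 2 + c2 * nrm y2 T ^ 2 := by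
      nlinarith [hnz, nrm_nonneg (T := T) (fun t => c1 • y1 t + c2 • y2 t),
        nrm_nonneg (T := T) y1, nrm_nonneg (T := T) y2,
        sq_nonneg (nrm y1 T - nrm y2 T), mul_nonneg hc1 hc2]
    have hipr : ipr (fun t => c1 • y1 t + c2 • y2 t) θ T
        = c1 * ipr y1 θ T + c2 * ipr y2 θ T := by
      simp only [ipr]
      have e : (fun s => ⟪c1 • y1 s + c2 • y2 s, θ s⟫)
          = fun s => c1 * ⟪y1 s, θ s⟫ + c2 * ⟪y2 s, θ s⟫ := by
        funext s; rw [inner_add_left, real_inner_smul_left, real_inner_smul_left]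
      have ia : IntegrableOn (fun s => c1 * ⟪y1 s, θ s⟫) (Set.Ioc 0 T) :=
        (int_inner hy1 hθL).const_mul c1
      have ib : IntegrableOn (fun s => c2 * ⟪y2 s, θ s⟫) (Set.Ioc 0 T) :=
        (int_inner hy2 hθL).const_mul c2
      rw [e, integral_add ia ib, integral_const_mul, integral_const_mul]
    have hKz : Kfun T θ (fun t => c1 • y1 t + c2 • y2 t) qa
        ≤ c1 * Kfun T θ y1 qa + c2 * Kfun T θ y2 qa := by
      simp only [Kfun]
      rw [hipr]
      have habs : |qa| * nrm (fun t => c1 • y1 t + c2 • y2 t) T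
          ≤ |qa| * (c1 * nrm y1 T + c2 * nrm y2 T) :=
        mul_le_mul_of_nonneg_left hnz (abs_nonneg qa)
      linarith [hsq, habs]
    have hKz' := mul_le_mul_of_nonneg_left hKz hlam
    linarith [eHz, hKz']
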